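/- The symmetric group S_3 is the unique finite group G (up to isomorphism) that is not a p-group for any prime p and satisfies |C(G)| = |G| - 1. -/

import Mathlib

open Subgroup Equiv Finset

private lemma exists_zpowers_eq {G : Type*} [Group G] (H : Subgroup G) (h : IsCyclic H) :
    ∃ g : G, Subgroup.zpowers g = H := by
  obtain ⟨⟨g, hg⟩, hgen⟩ := h
  refine ⟨g, le_antisymm (Subgroup.zpowers_le.2 hg) ?_⟩
  intro y hy
  obtain ⟨k, hk⟩ := Subgroup.mem_zpowers_iff.1 (hgen ⟨y, hy⟩)
  exact Subgroup.mem_zpowers_iff.2 ⟨k, by simpa using congrArg Subtype.val hk⟩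

private lemma isCyclic_zpowers {G : Type*} [Group G] (g : G) : IsCyclic (Subgroup.zpowers g) := by
  refine ⟨⟨⟨g, Subgroup.mem_zpowers g⟩, fun x => ?_⟩⟩
  obtain ⟨k, hk⟩ := Subgroup.mem_zpowers_iff.1 x.2
  exact Subgroup.mem_zpowers_iff.2 ⟨k, Subtype.ext (by simpa using hk)⟩

private lemma key_pair (G : Type*) [Group G] [Fintype G]
    (hnp : ¬ ∃ p : ℕ, p.Prime ∧ IsPGroup p G)
    (hc : Nat.card {H : Subgroup G // IsCyclic H} = Nat.card G - 1) :
    ∃ a : G, a * a ≠ 1 ∧ ∀ g : G, g ≠ a → g ≠ a⁻¹ → g * g = 1 := by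
  classical
  set C := {H : Subgroup G // IsCyclic H} with hC
  let f : G → C := fun g => ⟨Subgroup.zpowers g, _root_.isCyclic_zpowers g⟩
  have hsurj : Function.Surjective f := by
    rintro ⟨H, hH⟩
    obtain ⟨g, hg⟩ := exists_zpowers_eq H hH
    exact ⟨g, Subtype.ext hg⟩
  let n : C → ℕ := fun c => (Finset.univ.filter fun g => f g = c).card
  have hsum : ∑ c : C, n c = Fintype.card G :=
    (Finset.card_eq_sum_card_fiberwise (fun x _ => Finset.mem_univ (f x))).symm
  have hpos : ∀ c, 1 ≤ n c := by
    intro c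
    obtain ⟨g, hg⟩ := hsurj c
    exact Finset.card_pos.2 ⟨g, Finset.mem_filter.2 ⟨Finset.mem_univ g, hg⟩⟩
  have hCcard : Fintype.card C = Fintype.card G - 1 := by
    rw [← Nat.card_eq_fintype_card, ← Nat.card_eq_fintype_card]; exact hc
  have hGpos : 0 < Fintype.card G := Fintype.card_pos
  have hsum1 : ∑ c : C, (n c - 1) = 1 := by
    have h2 : ∑ c : C, (n c - 1) = (∑ c : C, n c) - ∑ _c : C, 1 :=
      (Finset.sum_tsub_distrib _ fun c _ => hpos c)
    rw [h2, hsum, Finset.sum_const, smul_eq_mul, mul_one, Finset.card_univ, hCcard]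
    omega
  have hex : ∃ c0 : C, n c0 - 1 ≠ 0 := by
    by_contra h
    push_neg at h
    rw [Finset.sum_eq_zero (fun c _ => h c)] at hsum1
    omega
  obtain ⟨c0, hc0⟩ := hex
  have hsplit : (n c0 - 1) + ∑ c ∈ Finset.univ.erase c0, (n c - 1) = ∑ c : C, (n c - 1) :=
    Finset.add_sum_erase _ (fun c => n c - 1) (Finset.mem_univ c0)
  have hrest0 : ∑ c ∈ Finset.univ.erase c0, (n c - 1) = 0 := by omega
  have hnc0 : n c0 = 2 := by have := hpos c0; omega
  have hother : ∀ c : C, c ≠ c0 → n c = 1 := by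
    intro c hcne
    have h0 := (Finset.sum_eq_zero_iff.1 hrest0) c (Finset.mem_erase.2 ⟨hcne, Finset.mem_univ c⟩)
    have := hpos c
    omega
  obtain ⟨a, b, hab, hfil⟩ := Finset.card_eq_two.1 hnc0
  have hamem : a ∈ Finset.univ.filter fun g => f g = c0 := by rw [hfil]; simp
  have hbmem : b ∈ Finset.univ.filter fun g => f g = c0 := by rw [hfil]; simp
  have hfa : f a = c0 := (Finset.mem_filter.1 hamem).2
  have hfb : f b = c0 := (Finset.mem_filter.1 hbmem).2
  have hfinv : ∀ g : G, f g⁻¹ = f g := fun g => Subtype.ext (Subgroup.zpowers_inv)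
  have hmemiff : ∀ g : G, f g = c0 → g = a ∨ g = b := by
    intro g hg
    have : g ∈ Finset.univ.filter fun g => f g = c0 :=
      Finset.mem_filter.2 ⟨Finset.mem_univ g, hg⟩
    rw [hfil] at this
    simpa using this
  have hainv : a⁻¹ = a ∨ a⁻¹ = b := hmemiff a⁻¹ (by rw [hfinv, hfa])
  have hbinv : b⁻¹ = a ∨ b⁻¹ = b := hmemiff b⁻¹ (by rw [hfinv, hfb])
  have hsingle : ∀ g : G, g ≠ a → g ≠ b → g * g = 1 := by
    intro g hga hgb
    have hfc : f g ≠ c0 := by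
      intro h
      rcases hmemiff g h with h' | h' <;> [exact hga h'; exact hgb h']
    have h1 : n (f g) = 1 := hother _ hfc
    have hginv : g⁻¹ = g := by
      have hcard := Finset.card_le_one.1 (le_of_eq h1)
      exact hcard g⁻¹ (Finset.mem_filter.2 ⟨Finset.mem_univ _, hfinv g⟩)
        g (Finset.mem_filter.2 ⟨Finset.mem_univ _, rfl⟩)
    calc g * g = g * g⁻¹ := by rw [hginv]
    _ = 1 := mul_inv_cancel g
  -- now case analysis
  rcases hainv with h1 | h1
  · rcases hbinv with h2 | h2
    · exact absurd (inv_injective (h2.trans h1.symm)).symm hab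
    · -- a⁻¹ = a and b⁻¹ = b : every element is an involution, contradiction
      exfalso
      apply hnp
      refine ⟨2, Nat.prime_two, fun g => ⟨1, ?_⟩⟩
      rw [pow_one, pow_two]
      by_cases hga : g = a
      · rw [hga]; nth_rewrite 2 [← h1]; exact mul_inv_cancel a
      by_cases hgb : g = b
      · rw [hgb]; nth_rewrite 2 [← h2]; exact mul_inv_cancel b
      exact hsingle g hga hgb
  · -- a⁻¹ = b
    refine ⟨a, ?_, ?_⟩
    · intro h
      have : a⁻¹ = a := inv_eq_of_mul_eq_one_right h
      exact hab (this.symm.trans h1)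
    · intro g hga hgai
      exact hsingle g hga (by rwa [h1] at hgai)


private def permMulCongr {α β : Type*} (e : α ≃ β) : Equiv.Perm α ≃* Equiv.Perm β :=
  { e.permCongr with
    map_mul' := fun p q => by
      ext x
      simp [Equiv.permCongr_apply, Equiv.Perm.mul_apply] }

private lemma build_iso (G : Type) [Group G] [Fintype G]
    (hnp : ¬ ∃ p : ℕ, p.Prime ∧ IsPGroup p G)
    (a : G) (ha2 : a * a ≠ 1) (hall : ∀ g : G, g ≠ a → g ≠ a⁻¹ → g * g = 1) :
    Nonempty (G ≃* Equiv.Perm (Fin 3)) := by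
  classical
  have ha1 : a ≠ 1 := fun h => ha2 (by rw [h, one_mul])
  have ha3 : a * a = a⁻¹ := by
    by_contra h2
    have h1 : a * a ≠ a := fun h => ha1 (mul_left_cancel (h.trans (mul_one a).symm))
    have h4 : (a * a) * (a * a) = 1 := hall (a * a) h1 h2
    have ha4 : a ^ (4:ℕ) = 1 := by
      rw [show (4:ℕ) = 2*2 from rfl, pow_mul, pow_two, pow_two]; exact h4
    refine hnp ⟨2, Nat.prime_two, fun g => ?_⟩
    by_cases hga : g = a
    · exact ⟨2, by rw [hga, show (2:ℕ)^2 = 4 from rfl]; exact ha4⟩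
    by_cases hgai : g = a⁻¹
    · exact ⟨2, by rw [hgai, inv_pow, show (2:ℕ)^2 = 4 from rfl, ha4, inv_one]⟩
    · exact ⟨1, by rw [pow_one, pow_two]; exact hall g hga hgai⟩
  have ha3pow : a ^ (3:ℕ) = 1 := by
    rw [show a ^ (3:ℕ) = a^2*a from by rw [pow_succ], pow_two, ha3, inv_mul_cancel]
  have hinvol : ∃ t : G, t * t = 1 ∧ t ≠ 1 := by
    by_contra h
    push_neg at h
    refine hnp ⟨3, Nat.prime_three, fun g => ?_⟩
    by_cases hga : g = a
    · exact ⟨1, by rw [hga, pow_one]; exact ha3pow⟩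
    by_cases hgai : g = a⁻¹
    · exact ⟨1, by rw [hgai, pow_one, inv_pow, ha3pow, inv_one]⟩
    · have hg1 := h g (hall g hga hgai); exact ⟨0, by rw [hg1]; simp⟩
  obtain ⟨t, ht2, ht1⟩ := hinvol
  have htinv : t⁻¹ = t := inv_eq_of_mul_eq_one_right ht2
  have hconj : ∀ s : G, s * s = 1 → s ≠ 1 → s * a * s = a⁻¹ := by
    intro s hs hs1
    have h1 : s * a ≠ a := fun h => hs1 (mul_right_cancel (h.trans (one_mul a).symm))
    have h2 : s * a ≠ a⁻¹ := by
      intro h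
      have hsa : s = a⁻¹ * a⁻¹ := by
        have h' := congrArg (· * a⁻¹) h
        simpa [mul_assoc] using h'
      have hseq : s = a := by rw [hsa, ← mul_inv_rev, ha3]; simp
      rw [hseq] at hs
      exact ha2 hs
    have h3 := hall (s * a) h1 h2
    have h5 : (s * a * s) * a = 1 := by
      rw [show (s*a*s)*a = (s*a)*(s*a) by group]; exact h3
    exact eq_inv_of_mul_eq_one_left h5
  have htat : t * a * t = a⁻¹ := hconj t ht2 ht1
  have htait : t * a⁻¹ * t = a := by
    have h := congrArg (·⁻¹) htat
    simp only [mul_inv_rev, inv_inv, htinv] at h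
    rw [mul_assoc]; exact h
  have hcover : ∀ g : G, g ∈ zpowers a ∨ t * g ∈ zpowers a := by
    intro g
    by_cases hga : g = a
    · exact Or.inl (hga ▸ Subgroup.mem_zpowers a)
    by_cases hgai : g = a⁻¹
    · exact Or.inl (hgai ▸ inv_mem (Subgroup.mem_zpowers a))
    by_cases hg1 : g = 1
    · exact Or.inl (hg1 ▸ one_mem _)
    have hg2 := hall g hga hgai
    have hgi : g⁻¹ = g := inv_eq_of_mul_eq_one_right hg2
    right
    by_cases h1 : t * g = a
    · exact h1 ▸ Subgroup.mem_zpowers a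
    by_cases h2 : t * g = a⁻¹
    · exact h2 ▸ inv_mem (Subgroup.mem_zpowers a)
    by_cases h0 : t * g = 1
    · exact h0 ▸ one_mem _
    exfalso
    have h3 := hall (t * g) h1 h2
    have hA : (t * g) * a * (t * g) = a⁻¹ := hconj (t * g) h3 h0
    have huinv : (t * g)⁻¹ = t * g := inv_eq_of_mul_eq_one_right h3
    have hgag : g * a * g = a⁻¹ := hconj g hg2 hg1
    have hB : t * (g * a * g) * t = a := by rw [hgag]; exact htait
    have hB' : (t * g) * a * (g * t) = a := by
      rw [show (t * g) * a * (g * t) = t * (g * a * g) * t by simp [mul_assoc]]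
      exact hB
    have hC : (t * g) * a * (t * g) = a := by
      calc (t*g)*a*(t*g) = (t*g)*a*((t*g)⁻¹) := by rw [huinv]
        _ = (t*g)*a*(g⁻¹*t⁻¹) := by rw [mul_inv_rev]
        _ = (t*g)*a*(g*t) := by rw [hgi, htinv]
        _ = a := hB'
    have haa : a⁻¹ = a := hA.symm.trans hC
    apply ha2
    nth_rewrite 2 [← haa]
    exact mul_inv_cancel a
  have htA : t ∉ zpowers a := by
    intro h
    obtain ⟨k, hk⟩ := Subgroup.mem_zpowers_iff.1 h
    have ha3z : a ^ (3:ℤ) = 1 := by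
      rw [show (3:ℤ) = ((3:ℕ):ℤ) from rfl, zpow_natCast, ha3pow]
    have h3t : t ^ (3:ℤ) = 1 := by
      rw [← hk, ← zpow_mul, mul_comm, zpow_mul, ha3z, one_zpow]
    have h3tn : t ^ (3:ℕ) = 1 := by
      rw [← zpow_natCast]; exact_mod_cast h3t
    have ht3 : t ^ (3:ℕ) = t := by rw [pow_succ, pow_two, ht2, one_mul]
    exact ht1 (ht3.symm.trans h3tn)
  have horder : orderOf a = 3 := by
    have hd : orderOf a ∣ 3 := orderOf_dvd_of_pow_eq_one ha3pow
    rcases (Nat.prime_three.eq_one_or_self_of_dvd _ hd) with h | h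
    · exact absurd (orderOf_eq_one_iff.1 h) ha1
    · exact h
  have hcardA : Nat.card (zpowers a) = 3 := by rw [Nat.card_zpowers, horder]
  have key : ¬ ((QuotientGroup.mk t : G ⧸ zpowers a) = QuotientGroup.mk 1) := by
    intro h
    have h' := QuotientGroup.eq.1 h
    rw [htinv, mul_one] at h'
    exact htA h'
  have hfb : Function.Bijective
      (fun b : Bool => (QuotientGroup.mk (if b then t else 1) : G ⧸ zpowers a)) := by
    constructor
    · intro x y hxy
      cases x <;> cases y <;> simp only [ite_true, ite_false] at hxy
      · rfl
      · exact (key hxy.symm).elim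
      · exact (key hxy).elim
      · rfl
    · intro q
      obtain ⟨g, rfl⟩ := QuotientGroup.mk_surjective q
      rcases hcover g with h | h
      · exact ⟨false, by simp only [ite_false]; exact QuotientGroup.eq.2 (by simpa using h)⟩
      · exact ⟨true, by simp only [ite_true]; exact QuotientGroup.eq.2 (by rwa [htinv])⟩
  have hcardQ : Nat.card (G ⧸ zpowers a) = 2 := by
    rw [← Nat.card_eq_of_bijective _ hfb]
    simp
  have hcardG : Nat.card G = 6 := by
    rw [Subgroup.card_eq_card_quotient_mul_card_subgroup (zpowers a), hcardQ, hcardA]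
  haveI : Fact (Nat.Prime 2) := ⟨Nat.prime_two⟩
  have hordt : orderOf t = 2 := orderOf_eq_prime (by rw [pow_two]; exact ht2) ht1
  have hcardHt : Nat.card (zpowers t) = 2 := by rw [Nat.card_zpowers, hordt]
  have hcardQ2 : Nat.card (G ⧸ zpowers t) = 3 := by
    have h := Subgroup.card_eq_card_quotient_mul_card_subgroup (zpowers t)
    rw [hcardG, hcardHt] at h
    omega
  have hHt : ∀ g ∈ zpowers t, g = 1 ∨ g = t := by
    intro g hg
    obtain ⟨k, hk⟩ := Subgroup.mem_zpowers_iff.1 hg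
    have ht2z : t ^ (2:ℤ) = 1 := by
      rw [show (2:ℤ) = ((2:ℕ):ℤ) from rfl, zpow_natCast, pow_two, ht2]
    have hk2 : t ^ k = t ^ (k % 2) := by
      conv_lhs => rw [← Int.mul_ediv_add_emod k 2]
      rw [zpow_add, zpow_mul, ht2z, one_zpow, one_mul]
    rcases Int.emod_two_eq k with h | h
    · left; rw [← hk, hk2, h, zpow_zero]
    · right; rw [← hk, hk2, h, zpow_one]
  -- the permutation action on G ⧸ zpowers t
  set Q := G ⧸ zpowers t with hQ
  let φ : G →* Equiv.Perm Q := MulAction.toPermHom G Q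
  have hinj : Function.Injective φ := by
    refine (injective_iff_map_eq_one φ).2 fun g hg => ?_
    have hfix : ∀ x : G, (QuotientGroup.mk (g * x) : Q) = QuotientGroup.mk x := by
      intro x
      have h := congrArg (fun p : Equiv.Perm Q => p (QuotientGroup.mk x)) hg
      exact (by simp only [φ, MulAction.toPermHom_apply, MulAction.toPerm_apply, OneMemClass.coe_one, Equiv.Perm.coe_one, id_eq] at h; exact h : g • (QuotientGroup.mk x : Q) = _)
    have hginv : g⁻¹ ∈ zpowers t := by simpa using QuotientGroup.eq.1 (hfix 1)
    have hg1 : g ∈ zpowers t := (zpowers t).inv_mem_iff.1 hginv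
    rcases hHt g hg1 with h | h
    · exact h
    exfalso
    have h2 := QuotientGroup.eq.1 (hfix a)
    rw [h, mul_inv_rev] at h2
    rcases hHt _ h2 with h4 | h4
    · have h5 : t⁻¹ = 1 := by
        calc t⁻¹ = a * (a⁻¹ * t⁻¹ * a) * a⁻¹ := by group
          _ = a * 1 * a⁻¹ := by rw [h4]
          _ = 1 := by group
      exact ht1 (by simpa using congrArg (·⁻¹) h5)
    · rw [htinv] at h4
      have hcomm : t * a = a * t := by
        calc t * a = a * (a⁻¹ * t * a) := by group
          _ = a * t := by rw [h4]
      have haa : a⁻¹ = a := by rw [← htat, hcomm, mul_assoc, ht2, mul_one]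
      apply ha2
      nth_rewrite 2 [← haa]
      exact mul_inv_cancel a
  letI : Fintype Q := Fintype.ofFinite Q
  have hc3 : Fintype.card Q = 3 := by rw [← Nat.card_eq_fintype_card]; exact hcardQ2
  have hcardPerm : Fintype.card (Equiv.Perm Q) = 6 := by rw [Fintype.card_perm, hc3]; rfl
  have hbijphi : Function.Bijective φ := by
    refine (Fintype.bijective_iff_injective_and_card φ).2 ⟨hinj, ?_⟩
    rw [hcardPerm, ← Nat.card_eq_fintype_card]
    exact hcardG
  exact ⟨(MulEquiv.ofBijective φ hbijphi).trans (permMulCongr (Fintype.equivFinOfCardEq hc3))⟩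

private def pset (g : Equiv.Perm (Fin 3)) : Finset (Equiv.Perm (Fin 3)) :=
  Finset.univ.image (fun k : Fin 6 => g ^ (k : ℕ))


set_option maxHeartbeats 1000000 in
theorem stmt_11 :
    (¬ ∃ p : ℕ, p.Prime ∧ IsPGroup p (Equiv.Perm (Fin 3))) ∧
    Nat.card {H : Subgroup (Equiv.Perm (Fin 3)) // IsCyclic H} =
      Nat.card (Equiv.Perm (Fin 3)) - 1 ∧
    ∀ (G : Type) [Group G] [Fintype G],
      (¬ ∃ p : ℕ, p.Prime ∧ IsPGroup p G) →
      Nat.card {H : Subgroup G // IsCyclic H} = Nat.card G - 1 →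
      Nonempty (G ≃* Equiv.Perm (Fin 3)) := by
  refine ⟨?_, ?_, ?_⟩
  · -- part 1
    rintro ⟨p, hp, hpg⟩
    have h6 : Fintype.card (Equiv.Perm (Fin 3)) = 6 := by
      rw [Fintype.card_perm, Fintype.card_fin]; decide
    haveI : Fact (Nat.Prime 2) := ⟨Nat.prime_two⟩
    haveI : Fact (Nat.Prime 3) := ⟨Nat.prime_three⟩
    obtain ⟨x, hx⟩ := exists_prime_orderOf_dvd_card (G := Equiv.Perm (Fin 3)) 2 (by rw [h6]; norm_num)
    obtain ⟨y, hy⟩ := exists_prime_orderOf_dvd_card (G := Equiv.Perm (Fin 3)) 3 (by rw [h6]; norm_num)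
    obtain ⟨k, hk⟩ := hpg x
    obtain ⟨l, hl⟩ := hpg y
    have h2 : (2:ℕ) ∣ p ^ k := hx ▸ orderOf_dvd_of_pow_eq_one hk
    have h3 : (3:ℕ) ∣ p ^ l := hy ▸ orderOf_dvd_of_pow_eq_one hl
    have e2 : 2 = p :=
      (Nat.prime_dvd_prime_iff_eq Nat.prime_two hp).1 (Nat.Prime.dvd_of_dvd_pow Nat.prime_two h2)
    have e3 : 3 = p :=
      (Nat.prime_dvd_prime_iff_eq Nat.prime_three hp).1 (Nat.Prime.dvd_of_dvd_pow Nat.prime_three h3)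
    omega
  · -- part 2
    classical
    have h6 : Fintype.card (Equiv.Perm (Fin 3)) = 6 := by
      rw [Fintype.card_perm, Fintype.card_fin]; decide
    have hmem : ∀ g x : Equiv.Perm (Fin 3), x ∈ pset g ↔ x ∈ Subgroup.zpowers g := by
      intro g x
      constructor
      · intro hx
        obtain ⟨k, -, rfl⟩ := Finset.mem_image.1 hx
        exact Subgroup.mem_zpowers_iff.2 ⟨(k : ℕ), by rw [zpow_natCast]⟩
      · intro hx
        obtain ⟨n, hn⟩ := (Submonoid.mem_powers_iff _ _).1 (mem_powers_iff_mem_zpowers.2 hx)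
        have hg6 : g ^ (6:ℕ) = 1 := by rw [← h6]; exact pow_card_eq_one
        have hmod : g ^ n = g ^ (n % 6) := pow_eq_pow_mod n hg6
        refine Finset.mem_image.2 ⟨⟨n % 6, Nat.mod_lt n (by norm_num)⟩, Finset.mem_univ _, ?_⟩
        rw [show ((⟨n % 6, Nat.mod_lt n (by norm_num)⟩ : Fin 6) : ℕ) = n % 6 from rfl, ← hmod, hn]
    have hzh : ∀ g g' : Equiv.Perm (Fin 3),
        Subgroup.zpowers g = Subgroup.zpowers g' ↔ pset g = pset g' := by
      intro g g'
      constructor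
      · intro he; ext x; rw [hmem, hmem, he]
      · intro he; ext x; rw [← hmem, ← hmem, he]
    let F : {H : Subgroup (Equiv.Perm (Fin 3)) // IsCyclic H} →
        {s : Finset (Equiv.Perm (Fin 3)) // s ∈ Finset.univ.image pset} :=
      fun p => ⟨pset (exists_zpowers_eq p.1 p.2).choose,
        Finset.mem_image.2 ⟨_, Finset.mem_univ _, rfl⟩⟩
    have hFbij : Function.Bijective F := by
      constructor
      · rintro ⟨H1, hH1⟩ ⟨H2, hH2⟩ hF
        have h1 := (exists_zpowers_eq H1 hH1).choose_spec
        have h2 := (exists_zpowers_eq H2 hH2).choose_spec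
        have h3 : pset (exists_zpowers_eq H1 hH1).choose
            = pset (exists_zpowers_eq H2 hH2).choose := congrArg Subtype.val hF
        have h4 := (hzh _ _).2 h3
        exact Subtype.ext (show H1 = H2 by rw [← h1, ← h2]; exact h4)
      · rintro ⟨s, hs⟩
        obtain ⟨g, -, rfl⟩ := Finset.mem_image.1 hs
        refine ⟨⟨Subgroup.zpowers g, _root_.isCyclic_zpowers g⟩, ?_⟩
        apply Subtype.ext
        exact (hzh _ _).1 (exists_zpowers_eq (Subgroup.zpowers g) (_root_.isCyclic_zpowers g)).choose_spec
    have hcount : Nat.card {H : Subgroup (Equiv.Perm (Fin 3)) // IsCyclic H}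
        = (Finset.univ.image pset).card := by
      rw [Nat.card_eq_of_bijective F hFbij]
      exact Nat.card_eq_finsetCard _
    rw [hcount, Nat.card_eq_fintype_card, h6]
    decide +kernel
  · intro G _ _ hnp hc
    obtain ⟨a, ha2, hall⟩ := key_pair G hnp hc
    exact build_iso G hnp a ha2 hall
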